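/- Let K ≥ 2 be an integer and z ∈ ℝ^K a fixed vector. Then the regularizer diverges as the temperature grows: R_τ(z) → +∞ as τ → ∞ (i.e., the function τ ↦ R_τ(z) tends to infinity along τ → ∞). -/

import Mathlib

open Real Finset Filter

/-- Sparsity-oriented regularizer
`R_τ(z) = -log( (Σ_i exp z_i) / (Σ_i exp (z_i/τ))^τ )`. -/
noncomputable def regR {K : ℕ} (τ : ℝ) (z : Fin K → ℝ) : ℝ :=
  - Real.log ((∑ i, Real.exp (z i)) / (∑ i, Real.exp (z i / τ)) ^ τ)

/-- for `K ≥ 2` and fixed `z`, the regularizer diverges as the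
temperature grows: `R_τ(z) → +∞` as `τ → ∞`. -/
theorem stmt_13 {K : ℕ} (hK : 2 ≤ K) (z : Fin K → ℝ) :
    Tendsto (fun τ : ℝ => regR τ z) atTop atTop := by
  have hKpos : 0 < K := by omega
  have hne : (Finset.univ : Finset (Fin K)).Nonempty :=
    Finset.univ_nonempty_iff.mpr ⟨⟨0, hKpos⟩⟩
  have hA : (0:ℝ) < ∑ i, Real.exp (z i) :=
    Finset.sum_pos (fun i _ => Real.exp_pos _) hne
  have hB : ∀ τ : ℝ, (0:ℝ) < ∑ i, Real.exp (z i / τ) := fun τ =>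
    Finset.sum_pos (fun i _ => Real.exp_pos _) hne
  have hre : ∀ τ : ℝ, regR τ z
      = τ * Real.log (∑ i, Real.exp (z i / τ)) - Real.log (∑ i, Real.exp (z i)) := by
    intro τ
    unfold regR
    rw [Real.log_div (ne_of_gt hA) (ne_of_gt (Real.rpow_pos_of_pos (hB τ) τ)),
      Real.log_rpow (hB τ)]
    ring
  simp only [hre]
  apply tendsto_atTop_add_const_right
  have hBtend : Tendsto (fun τ : ℝ => ∑ i, Real.exp (z i / τ)) atTop (nhds (K : ℝ)) := by
    have h1 : Tendsto (fun τ : ℝ => ∑ i : Fin K, Real.exp (z i / τ)) atTop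
        (nhds (∑ _i : Fin K, (1:ℝ))) := by
      apply tendsto_finset_sum
      intro i _
      have h0 : Tendsto (fun τ : ℝ => z i / τ) atTop (nhds 0) :=
        Tendsto.div_atTop tendsto_const_nhds tendsto_id
      simpa [Function.comp_def] using (Real.continuous_exp.tendsto 0).comp h0
    simpa using h1
  have hlog : Tendsto (fun τ : ℝ => Real.log (∑ i, Real.exp (z i / τ))) atTop
      (nhds (Real.log K)) :=
    (Real.continuousAt_log (by positivity : (K:ℝ) ≠ 0)).tendsto.comp hBtend
  have hlogK : 0 < Real.log K :=
    Real.log_pos (by exact_mod_cast by omega : (1:ℝ) < K)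
  exact Filter.Tendsto.atTop_mul_pos hlogK tendsto_id hlog
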